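/- Localised independence: in a weakly Markov category, if f : A → X ⊗ Y ⊗ Z exhibits conditional independence of X ⊗ Y and Z given A, and also conditional independence of X and Y ⊗ Z given A, then f exhibits conditional independence of X, Y, and Z given A (i.e., f is equivalent to the product of its three single-output marginals). -/

import Mathlib

open CategoryTheory MonoidalCategory

universe v u

/-- A gs-monoidal category: a symmetric monoidal category in which every
object carries a commutative comonoid structure (copy, discard), compatible
with the monoidal structure. -/
class GSMonoidal (C : Type u) [Category.{v} C] [MonoidalCategory C]
    [SymmetricCategory C] where
  copy : ∀ X : C, X ⟶ X ⊗ X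
  del : ∀ X : C, X ⟶ 𝟙_ C
  copy_del_left : ∀ X : C, copy X ≫ (del X ▷ X) ≫ (λ_ X).hom = 𝟙 X
  copy_del_right : ∀ X : C, copy X ≫ (X ◁ del X) ≫ (ρ_ X).hom = 𝟙 X
  copy_assoc : ∀ X : C,
    copy X ≫ (copy X ▷ X) ≫ (α_ X X X).hom = copy X ≫ (X ◁ copy X)
  copy_comm : ∀ X : C, copy X ≫ (β_ X X).hom = copy X
  copy_tensor : ∀ X Y : C,
    copy (X ⊗ Y) = (copy X ⊗ₘ copy Y) ≫ tensorμ X X Y Y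
  del_tensor : ∀ X Y : C, del (X ⊗ Y) = (del X ⊗ₘ del Y) ≫ (λ_ (𝟙_ C)).hom
  copy_unit : copy (𝟙_ C) = (λ_ (𝟙_ C)).inv
  del_unit : del (𝟙_ C) = 𝟙 (𝟙_ C)

namespace GSMonoidal

variable {C : Type u} [Category.{v} C] [MonoidalCategory C]
  [SymmetricCategory C] [GSMonoidal C]

/-- The convolution product on effects `a b : X ⟶ I`:
`(a, b) ↦ copy_X ≫ (a ⊗ b) ≫ (I ⊗ I ≅ I)`. -/
def emul {X : C} (a b : X ⟶ 𝟙_ C) : X ⟶ 𝟙_ C :=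
  copy X ≫ (a ⊗ₘ b) ≫ (λ_ (𝟙_ C)).hom

/-- The action of the effect monoid `C(X, I)` on the hom-set `C(X, Y)`:
`a · f = copy_X ≫ (a ⊗ f) ≫ (λ_ Y)`. -/
def act {X Y : C} (a : X ⟶ 𝟙_ C) (f : X ⟶ Y) : X ⟶ Y :=
  copy X ≫ (a ⊗ₘ f) ≫ (λ_ Y).hom

end GSMonoidal

/-- A weakly Markov category: a gs-monoidal category in which every effect
monoid `C(X, I)` is a group. -/
class WeaklyMarkov (C : Type u) [Category.{v} C] [MonoidalCategory C]
    [SymmetricCategory C] extends GSMonoidal C where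
  einv : ∀ {X : C}, (X ⟶ 𝟙_ C) → (X ⟶ 𝟙_ C)
  emul_einv : ∀ {X : C} (a : X ⟶ 𝟙_ C), GSMonoidal.emul a (einv a) = del X
  einv_emul : ∀ {X : C} (a : X ⟶ 𝟙_ C), GSMonoidal.emul (einv a) a = del X


namespace GSMonoidal

variable {C : Type u} [Category.{v} C] [MonoidalCategory C]
  [SymmetricCategory C] [GSMonoidal C]

lemma my_act_act {X Y : C} (a b : X ⟶ 𝟙_ C) (f : X ⟶ Y) :
    act a (act b f) = act (emul a b) f := by
  unfold act emul
  calc copy X ≫ (a ⊗ₘ copy X ≫ (b ⊗ₘ f) ≫ (λ_ Y).hom) ≫ (λ_ Y).hom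
      = copy X ≫ (X ◁ copy X) ≫ (a ⊗ₘ (b ⊗ₘ f)) ≫
        (𝟙_ C ◁ (λ_ Y).hom) ≫ (λ_ Y).hom := by
        simp only [← id_tensorHom, tensorHom_comp_tensorHom_assoc, Category.id_comp,
          Category.comp_id, Category.assoc]
    _ = copy X ≫ (copy X ▷ X) ≫ (α_ X X X).hom ≫ (a ⊗ₘ (b ⊗ₘ f)) ≫
        (𝟙_ C ◁ (λ_ Y).hom) ≫ (λ_ Y).hom := by
        rw [← reassoc_of% copy_assoc X]
    _ = copy X ≫ (copy X ▷ X) ≫ ((a ⊗ₘ b) ⊗ₘ f) ≫ (α_ _ _ _).hom ≫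
        (𝟙_ C ◁ (λ_ Y).hom) ≫ (λ_ Y).hom := by
        rw [associator_naturality_assoc]
    _ = copy X ≫ (copy X ▷ X) ≫ ((a ⊗ₘ b) ⊗ₘ f) ≫ ((λ_ (𝟙_ C)).hom ▷ Y) ≫
        (λ_ Y).hom := by
        congr 3
        coherence
    _ = copy X ≫ ((copy X ≫ (a ⊗ₘ b) ≫ (λ_ (𝟙_ C)).hom) ⊗ₘ f) ≫ (λ_ Y).hom := by
        simp only [← tensorHom_id, tensorHom_comp_tensorHom_assoc, tensorHom_comp_tensorHom,
          Category.comp_id, Category.id_comp]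

lemma my_act_del {X Y : C} (f : X ⟶ Y) : act (del X) f = f := by
  unfold act
  rw [MonoidalCategory.tensorHom_def]
  simp only [Category.assoc]
  rw [leftUnitor_naturality]
  rw [reassoc_of% copy_del_left X]

lemma my_act_copy {A X Y : C} (a : A ⟶ 𝟙_ C) (u : A ⟶ X) (v : A ⟶ Y) :
    act a (copy A ≫ (u ⊗ₘ v)) = copy A ≫ (act a u ⊗ₘ v) := by
  unfold act
  calc copy A ≫ (a ⊗ₘ copy A ≫ (u ⊗ₘ v)) ≫ (λ_ (X ⊗ Y)).hom
      = copy A ≫ (A ◁ copy A) ≫ (a ⊗ₘ (u ⊗ₘ v)) ≫ (λ_ (X ⊗ Y)).hom := by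
        simp only [← id_tensorHom, tensorHom_comp_tensorHom_assoc, Category.id_comp,
          Category.comp_id, Category.assoc]
    _ = copy A ≫ (copy A ▷ A) ≫ (α_ A A A).hom ≫ (a ⊗ₘ (u ⊗ₘ v)) ≫
        (λ_ (X ⊗ Y)).hom := by rw [← reassoc_of% copy_assoc A]
    _ = copy A ≫ (copy A ▷ A) ≫ ((a ⊗ₘ u) ⊗ₘ v) ≫ (α_ _ _ _).hom ≫
        (λ_ (X ⊗ Y)).hom := by rw [associator_naturality_assoc]
    _ = copy A ≫ (copy A ▷ A) ≫ ((a ⊗ₘ u) ⊗ₘ v) ≫ ((λ_ X).hom ▷ Y) := by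
        rw [leftUnitor_tensor_hom]; simp
    _ = copy A ≫ ((copy A ≫ (a ⊗ₘ u) ≫ (λ_ X).hom) ⊗ₘ v) := by
        simp only [← tensorHom_id, tensorHom_comp_tensorHom_assoc, tensorHom_comp_tensorHom,
          Category.comp_id, Category.id_comp]

lemma my_ract {X Y : C} (a : X ⟶ 𝟙_ C) (g : X ⟶ Y) :
    copy X ≫ (g ⊗ₘ a) ≫ (ρ_ Y).hom = act a g := by
  unfold act
  conv_lhs => rw [← copy_comm]
  rw [Category.assoc, ← BraidedCategory.braiding_naturality_assoc a g,
    braiding_rightUnitor]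

lemma my_assoc_del {X Y Z : C} :
    (α_ X Y Z).inv ≫ ((X ⊗ Y) ◁ del Z) ≫ (ρ_ (X ⊗ Y)).hom
      = X ◁ ((Y ◁ del Z) ≫ (ρ_ Y).hom) := by
  rw [← associator_inv_naturality_right_assoc]
  rw [MonoidalCategory.whiskerLeft_comp]
  congr 1
  coherence

end GSMonoidal

open GSMonoidal in
/-- Localised independence property: in a weakly Markov category, if
`f : A ⟶ (X ⊗ Y) ⊗ Z` exhibits conditional independence of `X ⊗ Y` and `Z`
given `A`, and also conditional independence of `X` and `Y ⊗ Z` given `A`,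
then `f` exhibits conditional independence of `X`, `Y` and `Z` given `A`,
i.e. it is a product (via copying) of three morphisms into `X`, `Y`, `Z`
(equivalently, it is equivalent to the product of its three single-output
marginals). -/
theorem stmt18 {C : Type u} [Category.{v} C] [MonoidalCategory C]
    [SymmetricCategory C] [WeaklyMarkov C]
    {A X Y Z : C} (f : A ⟶ (X ⊗ Y) ⊗ Z)
    (h₁ : ∃ (g : A ⟶ X ⊗ Y) (h : A ⟶ Z), f = copy A ≫ (g ⊗ₘ h))
    (h₂ : ∃ (g : A ⟶ X) (h : A ⟶ Y ⊗ Z),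
      f = copy A ≫ (g ⊗ₘ h) ≫ (α_ X Y Z).inv) :
    ∃ (gX : A ⟶ X) (gY : A ⟶ Y) (gZ : A ⟶ Z),
      f = copy A ≫ ((copy A ≫ (gX ⊗ₘ gY)) ⊗ₘ gZ) := by
  obtain ⟨g, h, e1⟩ := h₁
  obtain ⟨g', h', e2⟩ := h₂
  set a : A ⟶ 𝟙_ C := h ≫ del Z with ha
  set gY : A ⟶ Y := h' ≫ (Y ◁ del Z) ≫ (ρ_ Y).hom with hgY
  have k1 : f ≫ ((X ⊗ Y) ◁ del Z) ≫ (ρ_ (X ⊗ Y)).hom = act a g := by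
    rw [e1]
    simp only [Category.assoc, ← id_tensorHom, tensorHom_comp_tensorHom_assoc,
      Category.comp_id]
    rw [my_ract]
  have k2 : f ≫ ((X ⊗ Y) ◁ del Z) ≫ (ρ_ (X ⊗ Y)).hom
      = copy A ≫ (g' ⊗ₘ gY) := by
    rw [e2]
    simp only [Category.assoc]
    rw [my_assoc_del]
    simp only [← id_tensorHom, tensorHom_comp_tensorHom, Category.comp_id, hgY,
      Category.assoc]
  have key : act a g = copy A ≫ (g' ⊗ₘ gY) := by rw [← k1, k2]
  have hg : g = act (WeaklyMarkov.einv a) (copy A ≫ (g' ⊗ₘ gY)) := by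
    rw [← key, my_act_act, WeaklyMarkov.einv_emul, my_act_del]
  refine ⟨act (WeaklyMarkov.einv a) g', gY, h, ?_⟩
  rw [e1, hg, my_act_copy]
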